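/- arXiv:1910.10565 — 3 statements merged into one kernel-verified Lean document; each statement's English description precedes it below -/
import Mathlib

section
/- For the Fisher-Snedecor F distribution with parameters m > 0, m_s > 1, γ̄ > 0, and any real n with −m < n < m_s, the n-th moment is E[γⁿ] = ((m_s−1)γ̄/m)ⁿ · B(m+n, m_s−n) / B(m, m_s). -/
open Real MeasureTheory Set

/-- Euler beta function. -/
noncomputable def eulerBeta (a b : ℝ) : ℝ := Real.Gamma a * Real.Gamma b / Real.Gamma (a + b)

lemma betaIoc (a b : ℝ) (ha : 0 < a) (hb : 0 < b) :
    ∫ x in Ioc (0:ℝ) 1, x ^ (a-1) * (1-x) ^ (b-1) =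
      Real.Gamma a * Real.Gamma b / Real.Gamma (a + b) := by
  have h := Complex.Gamma_mul_Gamma_eq_betaIntegral (s := (a:ℂ)) (t := (b:ℂ))
    (by simpa using ha) (by simpa using hb)
  rw [Complex.betaIntegral] at h
  have h2 : (∫ x in (0:ℝ)..1, (x:ℂ) ^ ((a:ℂ)-1) * (1-(x:ℂ)) ^ ((b:ℂ)-1)) =
      ((∫ x in Ioc (0:ℝ) 1, x ^ (a-1) * (1-x) ^ (b-1) : ℝ) : ℂ) := by
    rw [intervalIntegral.integral_of_le zero_le_one]
    calc (∫ x in Ioc (0:ℝ) 1, (x:ℂ) ^ ((a:ℂ)-1) * (1-(x:ℂ)) ^ ((b:ℂ)-1))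
        = ∫ x in Ioc (0:ℝ) 1, ((x ^ (a-1) * (1-x) ^ (b-1) : ℝ) : ℂ) := by
          refine setIntegral_congr_fun measurableSet_Ioc fun x hx => ?_
          rw [Complex.ofReal_mul, Complex.ofReal_cpow hx.1.le,
            Complex.ofReal_cpow (by linarith [hx.2] : (0:ℝ) ≤ 1 - x)]
          push_cast
          ring
      _ = _ := integral_ofReal
  rw [h2, ← Complex.ofReal_add, Complex.Gamma_ofReal, Complex.Gamma_ofReal,
    Complex.Gamma_ofReal, ← Complex.ofReal_mul, ← Complex.ofReal_mul] at h
  have h4 := Complex.ofReal_inj.mp h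
  have hg : Real.Gamma (a + b) ≠ 0 := (Real.Gamma_pos_of_pos (by linarith)).ne'
  field_simp [h4]
  rw [h4]; ring

lemma betaIoi (a b : ℝ) (ha : 0 < a) (hb : 0 < b) :
    ∫ x in Ioi (0:ℝ), x ^ (a-1) * (1+x) ^ (-(a+b)) =
      Real.Gamma a * Real.Gamma b / Real.Gamma (a + b) := by
  have hderiv : ∀ t ∈ Ioo (0:ℝ) 1,
      HasDerivWithinAt (fun t : ℝ => t / (1 - t)) (((1-t)^2)⁻¹) (Ioo 0 1) t := by
    intro t ht
    have h1 : (1:ℝ) - t ≠ 0 := by have := ht.2; intro h; linarith [sub_eq_zero.mp h]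
    have := (hasDerivAt_id t).div ((hasDerivAt_const t 1).sub (hasDerivAt_id t)) h1
    refine this.hasDerivWithinAt.congr_deriv ?_
    simp only [Pi.sub_apply, id]
    ring
  have hinj : InjOn (fun t : ℝ => t / (1 - t)) (Ioo 0 1) := by
    intro x hx y hy h
    have hx1 : (1:ℝ) - x ≠ 0 := by have := hx.2; intro h; linarith [sub_eq_zero.mp h]
    have hy1 : (1:ℝ) - y ≠ 0 := by have := hy.2; intro h; linarith [sub_eq_zero.mp h]
    field_simp at h
    linarith
  have himg : (fun t : ℝ => t / (1 - t)) '' Ioo 0 1 = Ioi 0 := by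
    ext y
    constructor
    · rintro ⟨t, ht, rfl⟩
      exact div_pos ht.1 (by linarith [ht.2])
    · intro hy
      have hy' : 0 < y := hy
      refine ⟨y / (1 + y), ⟨div_pos hy' (by linarith),
        (div_lt_one (by linarith)).mpr (by linarith)⟩, ?_⟩
      have h1 : (1:ℝ) + y ≠ 0 := by positivity
      field_simp
      ring
  rw [← himg, integral_image_eq_integral_abs_deriv_smul measurableSet_Ioo hderiv hinj]
  have hptwise : ∀ t ∈ Ioo (0:ℝ) 1,
      |((1-t)^2)⁻¹| • ((fun x : ℝ => x ^ (a-1) * (1+x) ^ (-(a+b))) (t / (1-t)))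
        = t ^ (a-1) * (1-t) ^ (b-1) := by
    intro t ht
    have ht0 : 0 < t := ht.1
    have hu : 0 < 1 - t := by linarith [ht.2]
    have h1 : 1 + t / (1 - t) = (1 - t)⁻¹ := by field_simp; ring
    have h2 : ((1-t)^2)⁻¹ = (1-t) ^ (-2 : ℝ) := by
      rw [← Real.rpow_natCast (1-t) 2, ← Real.rpow_neg hu.le]; norm_num
    rw [smul_eq_mul, abs_of_pos (by positivity)]
    dsimp only
    rw [h1, Real.div_rpow ht0.le hu.le, Real.inv_rpow hu.le, ← Real.rpow_neg hu.le, neg_neg,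
      div_eq_mul_inv, ← Real.rpow_neg hu.le, h2]
    conv_rhs => rw [show b - 1 = -2 + (-(a-1) + (a+b)) by ring, Real.rpow_add hu, Real.rpow_add hu]
    ring
  rw [setIntegral_congr_fun measurableSet_Ioo hptwise, ← integral_Ioc_eq_integral_Ioo]
  exact betaIoc a b ha hb


/-- n-th moment of the Fisher-Snedecor F distribution. -/
theorem fisher_snedecor_nth_moment (m ms γb n : ℝ) (hm : 0 < m) (hms : 1 < ms)
    (hγb : 0 < γb) (hn1 : -m < n) (hn2 : n < ms) :
    ∫ γ in Ioi (0:ℝ),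
      γ ^ n * ((m ^ m * (ms - 1) ^ ms * γb ^ ms * γ ^ (m - 1)) /
        (eulerBeta m ms * (m * γ + (ms - 1) * γb) ^ (m + ms))) =
      ((ms - 1) * γb / m) ^ n * eulerBeta (m + n) (ms - n) / eulerBeta m ms := by
  set c : ℝ := (ms - 1) * γb / m with hc_def
  have hc : 0 < c := div_pos (mul_pos (by linarith) hγb) hm
  set B : ℝ := eulerBeta m ms with hB_def
  have hB : 0 < B := by
    have h1 := Real.Gamma_pos_of_pos hm
    have h2 := Real.Gamma_pos_of_pos (by linarith : (0:ℝ) < ms)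
    have h3 := Real.Gamma_pos_of_pos (by linarith : (0:ℝ) < m + ms)
    exact div_pos (mul_pos h1 h2) h3
  set a : ℝ := m + n with ha_def
  set b : ℝ := ms - n with hb_def
  have ha : 0 < a := by rw [ha_def]; linarith
  have hb : 0 < b := by rw [hb_def]; linarith
  have key : ∀ γ ∈ Ioi (0:ℝ),
      γ ^ n * ((m ^ m * (ms - 1) ^ ms * γb ^ ms * γ ^ (m - 1)) /
        (B * (m * γ + (ms - 1) * γb) ^ (m + ms))) =
      (c ^ n / (B * c)) * ((c⁻¹ * γ) ^ (a - 1) * (1 + c⁻¹ * γ) ^ (-(a + b))) := by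
    intro γ hγ
    have hγ0 : 0 < γ := hγ
    have h1x : 0 < 1 + c⁻¹ * γ := by positivity
    have hP : 0 < (1 + c⁻¹ * γ) ^ (m + ms) := Real.rpow_pos_of_pos h1x _
    have hmc : m * c = (ms - 1) * γb := by
      rw [hc_def]; field_simp
    have hsplit : m * γ + (ms - 1) * γb = (m * c) * (1 + c⁻¹ * γ) := by
      rw [mul_add, mul_one, show m * c * (c⁻¹ * γ) = m * γ from by
        field_simp, hmc]
      ring
    have hexp : -(a + b) = -(m + ms) := by rw [ha_def, hb_def]; ring
    have hms2 : (ms - 1) ^ ms * γb ^ ms = m ^ ms * c ^ ms := by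
      rw [← Real.mul_rpow (by linarith : (0:ℝ) ≤ ms - 1) hγb.le,
        show (ms - 1) * γb = m * c from hmc.symm, Real.mul_rpow hm.le hc.le]
    have hmm : m ^ m * m ^ ms = m ^ (m + ms) := (Real.rpow_add hm _ _).symm
    have hγγ : γ ^ n * γ ^ (m - 1) = γ ^ (a - 1) := by
      rw [← Real.rpow_add hγ0]; congr 1; rw [ha_def]; ring
    have hfrac : c ^ ms / (B * c ^ (m + ms)) = c ^ n * (c ^ (a - 1))⁻¹ / (B * c) := by
      rw [div_eq_div_iff (by positivity) (by positivity)]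
      rw [show c ^ ms * (B * c) = B * (c ^ ms * c) by ring, ← Real.rpow_add_one hc.ne' ms]
      rw [show c ^ n * (c ^ (a-1))⁻¹ * (B * c ^ (m+ms)) =
        B * (c ^ n * c ^ (m+ms)) * (c ^ (a-1))⁻¹ by ring, ← Real.rpow_add hc]
      rw [show c ^ (n + (m+ms)) = c ^ (ms+1) * c ^ (a-1) from by
        rw [← Real.rpow_add hc]; congr 1; rw [ha_def]; ring]
      field_simp
    calc γ ^ n * ((m ^ m * (ms - 1) ^ ms * γb ^ ms * γ ^ (m - 1)) /
          (B * (m * γ + (ms - 1) * γb) ^ (m + ms)))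
        = (γ ^ n * γ ^ (m-1)) * ((m ^ m * m ^ ms) * c ^ ms) /
          (B * (m ^ (m+ms) * c ^ (m+ms) * (1 + c⁻¹ * γ) ^ (m+ms))) := by
          rw [hsplit, Real.mul_rpow (by positivity) h1x.le, Real.mul_rpow hm.le hc.le,
            show m ^ m * (ms-1) ^ ms * γb ^ ms = m ^ m * ((ms-1) ^ ms * γb ^ ms) from by ring,
            hms2]
          ring
      _ = γ ^ (a-1) * (c ^ ms / (B * c ^ (m+ms))) * ((1 + c⁻¹ * γ) ^ (m+ms))⁻¹ := by
          rw [hγγ, hmm]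
          field_simp
      _ = γ ^ (a-1) * (c ^ n * (c ^ (a-1))⁻¹ / (B * c)) * ((1 + c⁻¹ * γ) ^ (m+ms))⁻¹ := by
          rw [hfrac]
      _ = (c ^ n / (B * c)) * ((c⁻¹ * γ) ^ (a - 1) * (1 + c⁻¹ * γ) ^ (-(a + b))) := by
          rw [hexp, Real.rpow_neg h1x.le, Real.mul_rpow (inv_nonneg.mpr hc.le) hγ0.le,
            Real.inv_rpow hc.le]
          ring
  rw [setIntegral_congr_fun measurableSet_Ioi key, integral_const_mul]
  have hsub : (∫ γ in Ioi (0:ℝ), (c⁻¹ * γ) ^ (a - 1) * (1 + c⁻¹ * γ) ^ (-(a + b)))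
      = c * ∫ x in Ioi (0:ℝ), x ^ (a - 1) * (1 + x) ^ (-(a + b)) := by
    have := integral_comp_mul_left_Ioi (fun x => x ^ (a - 1) * (1 + x) ^ (-(a + b))) 0
      (inv_pos.mpr hc)
    simp only [mul_zero, smul_eq_mul, inv_inv] at this
    exact this
  rw [hsub, betaIoi a b ha hb]
  rw [show eulerBeta a b = Real.Gamma a * Real.Gamma b / Real.Gamma (a + b) from rfl]
  field_simp
end

section
/- The single-RV Fisher-Snedecor F moment-matching equations are consistent: if H = (1+m)(m_s−1)/(m(m_s−2)) and Y = (m_s−1)(2+m)/(m(m_s−3)) with m > 0 and m_s > 3, then m = −2(H−Y)/(H − 2Y + HY) and m_s = (4H − 3Y − 1)/(2H − Y − 1). -/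
/-- Consistency of the single-RV Fisher-Snedecor F moment-matching equations. -/
theorem moment_matching_consistency (m ms H Y : ℝ) (hm : 0 < m) (hms : 3 < ms)
    (hH : H = (1 + m) * (ms - 1) / (m * (ms - 2)))
    (hY : Y = (ms - 1) * (2 + m) / (m * (ms - 3)))
    (hden1 : H - 2 * Y + H * Y ≠ 0) (hden2 : 2 * H - Y - 1 ≠ 0) :
    m = -(2 * (H - Y)) / (H - 2 * Y + H * Y) ∧
    ms = (4 * H - 3 * Y - 1) / (2 * H - Y - 1) := by
  have hm0 : m ≠ 0 := ne_of_gt hm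
  have h2 : ms - 2 ≠ 0 := by nlinarith
  have h3 : ms - 3 ≠ 0 := by nlinarith
  subst hH hY
  constructor
  · rw [eq_div_iff hden1]
    field_simp
    ring
  · rw [eq_div_iff hden2]
    field_simp
    ring
end

section
/- Asymptotic CDF at the origin: for the Fisher-Snedecor F distribution with parameters m > 0, m_s > 1, γ̄ > 0, lim_{x→0⁺} F(x)/x^m = m^{m−1}/(B(m, m_s)((m_s−1)γ̄)^m). -/
open Real MeasureTheory Set Filter

/-- Asymptotic behavior of the Fisher-Snedecor F CDF at the origin. -/
theorem fisher_snedecor_cdf_asymptotic (m ms γb : ℝ) (hm : 0 < m) (hms : 1 < ms)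
    (hγb : 0 < γb) :
    Tendsto (fun x : ℝ =>
        (∫ γ in (0:ℝ)..x,
          (m ^ m * (ms - 1) ^ ms * γb ^ ms * γ ^ (m - 1)) /
            (eulerBeta m ms * (m * γ + (ms - 1) * γb) ^ (m + ms))) / x ^ m)
      (nhdsWithin 0 (Ioi 0))
      (nhds (m ^ (m - 1) / (eulerBeta m ms * ((ms - 1) * γb) ^ m))) := by
  have hc : 0 < (ms - 1) * γb := mul_pos (by linarith) hγb
  have hB : 0 < eulerBeta m ms :=
    div_pos (mul_pos (Real.Gamma_pos_of_pos hm) (Real.Gamma_pos_of_pos (by linarith)))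
      (Real.Gamma_pos_of_pos (by linarith))
  set G : ℝ → ℝ := fun γ =>
    (m ^ m * (ms - 1) ^ ms * γb ^ ms) /
      (eulerBeta m ms * (m * γ + (ms - 1) * γb) ^ (m + ms)) with hGdef
  set h : ℝ → ℝ := fun γ =>
    (m ^ m * (ms - 1) ^ ms * γb ^ ms * γ ^ (m - 1)) /
      (eulerBeta m ms * (m * γ + (ms - 1) * γb) ^ (m + ms)) with hhdef
  have hhG : h = fun γ => γ ^ (m - 1) * G γ := by
    funext γ; simp only [hhdef, hGdef]; ring
  -- continuity of G at nonnegative points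
  have hGc : ∀ x : ℝ, 0 ≤ x → ContinuousAt G x := by
    intro x hx
    have hpos : 0 < m * x + (ms - 1) * γb := by
      have := mul_nonneg hm.le hx; linarith
    apply ContinuousAt.div continuousAt_const
    · exact continuousAt_const.mul
        ((((continuous_const.mul continuous_id).add continuous_const).continuousAt).rpow_const
          (Or.inl hpos.ne'))
    · exact (mul_pos hB (Real.rpow_pos_of_pos hpos _)).ne'
  have hhc : ∀ x : ℝ, 0 < x → ContinuousAt h x := by
    intro x hx
    rw [hhG]
    exact (Real.continuousAt_rpow_const _ _ (Or.inl hx.ne')).mul (hGc x hx.le)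
  -- integrability of h on [0,1]
  have hGon : ContinuousOn G (uIcc (0:ℝ) 1) := by
    intro x hx
    exact (hGc x (by simpa using hx.1)).continuousWithinAt
  have hint1 : IntervalIntegrable h volume 0 1 := by
    rw [hhG]
    exact (intervalIntegral.intervalIntegrable_rpow' (by linarith)).mul_continuousOn hGon
  have hintx : ∀ x ∈ Ioo (0:ℝ) 1, IntervalIntegrable h volume 0 x := by
    intro x hx
    refine hint1.mono_set ?_
    rw [uIcc_of_le (le_of_lt hx.1), uIcc_of_le zero_le_one]
    exact Icc_subset_Icc le_rfl hx.2.le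
  have hmeas : ∀ x ∈ Ioo (0:ℝ) 1, StronglyMeasurableAtFilter h (nhds x) volume := by
    have := ContinuousAt.stronglyMeasurableAtFilter (μ := volume) isOpen_Ioi
      (fun x hx => hhc x hx)
    exact fun x hx => this x hx.1
  -- L'Hopital
  have key := HasDerivAt.lhopital_zero_right_on_Ioo (a := (0:ℝ)) (b := 1)
    (f := fun x => ∫ γ in (0:ℝ)..x, h γ) (f' := h)
    (g := fun x : ℝ => x ^ m) (g' := fun x : ℝ => m * x ^ (m - 1))
    (l := nhds (m ^ (m - 1) / (eulerBeta m ms * ((ms - 1) * γb) ^ m)))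
    zero_lt_one
    (fun x hx => intervalIntegral.integral_hasDerivAt_right (hintx x hx)
      (hmeas x hx) (hhc x hx.1))
    (fun x hx => by
      have := Real.hasDerivAt_rpow_const (x := x) (p := m) (Or.inl hx.1.ne')
      simpa [mul_comm] using this)
    (fun x hx => by
      exact (mul_pos hm (Real.rpow_pos_of_pos hx.1 _)).ne')
    ?_ ?_ ?_
  · exact key
  · -- integral tends to 0
    have hcont := intervalIntegral.continuousOn_primitive_interval' hint1
      (left_mem_uIcc)
    have h0 : ContinuousWithinAt (fun x => ∫ γ in (0:ℝ)..x, h γ) (uIcc (0:ℝ) 1) 0 :=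
      hcont 0 left_mem_uIcc
    have : Tendsto (fun x => ∫ γ in (0:ℝ)..x, h γ) (nhdsWithin 0 (Ioi 0)) (nhds (∫ γ in (0:ℝ)..(0:ℝ), h γ)) := by
      refine h0.tendsto.mono_left ?_
      rw [uIcc_of_le zero_le_one, ← nhdsWithin_Ioc_eq_nhdsGT zero_lt_one]
      exact nhdsWithin_mono _ Ioc_subset_Icc_self
    simpa using this
  · -- x ^ m tends to 0
    have : ContinuousAt (fun x : ℝ => x ^ m) 0 :=
      Real.continuousAt_rpow_const _ _ (Or.inr hm.le)
    have h2 := this.tendsto.mono_left (nhdsWithin_le_nhds (s := Ioi 0))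
    simpa [Real.zero_rpow hm.ne'] using h2
  · -- derivative quotient tends to limit
    have heq : ∀ᶠ x in nhdsWithin (0:ℝ) (Ioi 0),
        h x / (m * x ^ (m - 1)) = G x / m := by
      filter_upwards [self_mem_nhdsWithin] with x hx
      have hxp : (0:ℝ) < x := hx
      have hxr : (0:ℝ) < x ^ (m - 1) := Real.rpow_pos_of_pos hxp _
      rw [hhG]
      field_simp
    rw [tendsto_congr' heq]
    have hG0 : Tendsto G (nhdsWithin 0 (Ioi 0)) (nhds (G 0)) :=
      (hGc 0 le_rfl).tendsto.mono_left nhdsWithin_le_nhds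
    have hval : G 0 / m = m ^ (m - 1) / (eulerBeta m ms * ((ms - 1) * γb) ^ m) := by
      have h1 : (ms - 1) ^ ms * γb ^ ms = ((ms - 1) * γb) ^ ms :=
        (Real.mul_rpow (by linarith) hγb.le).symm
      have h2 : ((ms - 1) * γb) ^ (m + ms) = ((ms - 1) * γb) ^ m * ((ms - 1) * γb) ^ ms :=
        Real.rpow_add hc _ _
      have h3 : m ^ m = m ^ (m - 1) * m := by
        rw [← Real.rpow_add_one hm.ne' (m - 1)]; ring_nf
      simp only [hGdef, mul_zero, zero_add]
      rw [h2, h3, mul_assoc (m ^ (m-1) * m), h1]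
      have hcm : ((ms - 1) * γb) ^ m ≠ 0 := (Real.rpow_pos_of_pos hc _).ne'
      have hcms : ((ms - 1) * γb) ^ ms ≠ 0 := (Real.rpow_pos_of_pos hc _).ne'
      field_simp
    rw [← hval]
    exact hG0.div_const m
end
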